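/- Let f be a real harmonic function on a connected open simply connected subset of ℝ², i.e. ∂²f/∂u² + ∂²f/∂v² = 0. Then either f is constant, or the set of points where the gradient of f vanishes consists of isolated points. -/

import Mathlib

open Filter Topology

/-- Partial derivative in direction `i` of a scalar function on `ℝ²`. -/
noncomputable def pd (i : Fin 2) (f : (Fin 2 → ℝ) → ℝ) (p : Fin 2 → ℝ) : ℝ :=
  fderiv ℝ f p (Pi.single i 1)

noncomputable def eC : ℂ ≃L[ℝ] (Fin 2 → ℝ) :=
  Complex.equivRealProdCLM.trans (ContinuousLinearEquiv.finTwoArrow ℝ ℝ).symm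

lemma eC_apply (z : ℂ) : eC z = ![z.re, z.im] := by
  simp [eC, ContinuousLinearEquiv.finTwoArrow, LinearEquiv.finTwoArrow, LinearEquiv.piFinTwo]
  rfl

lemma eC_one : eC 1 = Pi.single 0 1 := by
  rw [eC_apply]; ext i; fin_cases i <;> simp

lemma eC_I : eC Complex.I = Pi.single 1 1 := by
  rw [eC_apply]; ext i; fin_cases i <;> simp

noncomputable def gg (f : (Fin 2 → ℝ) → ℝ) (z : ℂ) : ℂ :=
  ((pd 0 f (eC z) : ℝ) : ℂ) - (pd 1 f (eC z)) • Complex.I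

lemma gg_diff (U : Set (Fin 2 → ℝ)) (hUopen : IsOpen U)
    (f : (Fin 2 → ℝ) → ℝ) (hf : ContDiffOn ℝ 2 f U)
    (hharm : ∀ p ∈ U, pd 0 (pd 0 f) p + pd 1 (pd 1 f) p = 0)
    (z : ℂ) (hzU : eC z ∈ U) : DifferentiableAt ℂ (gg f) z := by
  set p := eC z with hp
  have hc2 : ContDiffAt ℝ 2 f p := hf.contDiffAt (hUopen.mem_nhds hzU)
  have hf1 : ContDiffAt ℝ 1 (fderiv ℝ f) p := hc2.fderiv_right (by norm_num)
  have hfd : DifferentiableAt ℝ (fderiv ℝ f) p := hf1.differentiableAt one_ne_zero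
  set D2 := fderiv ℝ (fderiv ℝ f) p with hD2
  have key : ∀ i : Fin 2, HasFDerivAt (pd i f) (D2.flip (Pi.single i 1)) p := by
    intro i
    have h := hfd.hasFDerivAt.clm_apply (hasFDerivAt_const (Pi.single i 1 : Fin 2 → ℝ) p)
    simp at h
    exact h
  -- second partials
  have hpdpd : ∀ i j : Fin 2, pd i (pd j f) p = D2 (Pi.single i 1) (Pi.single j 1) := by
    intro i j
    simp only [pd]
    rw [(key j).fderiv]
    rfl
  have hsymm : D2 (Pi.single 0 1) (Pi.single 1 1) = D2 (Pi.single 1 1) (Pi.single 0 1) :=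
    (hc2.isSymmSndFDerivAt (by norm_num)).eq _ _
  have hh : D2 (Pi.single 0 1) (Pi.single 0 1) + D2 (Pi.single 1 1) (Pi.single 1 1) = 0 := by
    rw [← hpdpd 0 0, ← hpdpd 1 1]; exact hharm p hzU
  -- real derivative of gg
  have h0 : HasFDerivAt (fun w : ℂ => pd 0 f (eC w))
      ((D2.flip (Pi.single 0 1)).comp (eC : ℂ →L[ℝ] (Fin 2 → ℝ))) z :=
    by have := (key 0).comp z eC.hasFDerivAt; exact this
  have h1 : HasFDerivAt (fun w : ℂ => pd 1 f (eC w))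
      ((D2.flip (Pi.single 1 1)).comp (eC : ℂ →L[ℝ] (Fin 2 → ℝ))) z :=
    by have := (key 1).comp z eC.hasFDerivAt; exact this
  have H0 : HasFDerivAt (fun w : ℂ => ((pd 0 f (eC w) : ℝ) : ℂ))
      (Complex.ofRealCLM.comp ((D2.flip (Pi.single 0 1)).comp (eC : ℂ →L[ℝ] (Fin 2 → ℝ)))) z :=
    Complex.ofRealCLM.hasFDerivAt.comp z h0
  have H1 : HasFDerivAt (fun w : ℂ => (pd 1 f (eC w)) • Complex.I)
      (((D2.flip (Pi.single 1 1)).comp (eC : ℂ →L[ℝ] (Fin 2 → ℝ))).smulRight Complex.I) z :=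
    h1.smul_const Complex.I
  set L := (Complex.ofRealCLM.comp ((D2.flip (Pi.single 0 1)).comp (eC : ℂ →L[ℝ] (Fin 2 → ℝ)))) -
    (((D2.flip (Pi.single 1 1)).comp (eC : ℂ →L[ℝ] (Fin 2 → ℝ))).smulRight Complex.I) with hL
  have HG : HasFDerivAt (gg f) L z := H0.sub H1
  -- Cauchy-Riemann: L is complex linear
  set a := D2 (Pi.single 0 1) (Pi.single 0 1) with ha
  set b := D2 (Pi.single 0 1) (Pi.single 1 1) with hb
  have hL1 : L 1 = (a : ℂ) - (b : ℂ) * Complex.I := by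
    simp [hL, eC_one, Complex.real_smul]
    rfl
  have hLI : L Complex.I = (b : ℂ) + (a : ℂ) * Complex.I := by
    have e1 : D2 (Pi.single 1 1) (Pi.single 0 1) = b := hsymm.symm
    have e2 : D2 (Pi.single 1 1) (Pi.single 1 1) = -a := by linarith [hh]
    simp only [hL, ContinuousLinearMap.sub_apply, ContinuousLinearMap.comp_apply,
      ContinuousLinearMap.smulRight_apply, ContinuousLinearEquiv.coe_coe, eC_I,
      ContinuousLinearMap.flip_apply, e1, e2]
    simp [Complex.real_smul]
  set c : ℂ := (a : ℂ) - (b : ℂ) * Complex.I with hc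
  set L' : ℂ →L[ℂ] ℂ := c • (ContinuousLinearMap.id ℂ ℂ) with hL'
  have hrs : L'.restrictScalars ℝ = L := by
    apply ContinuousLinearMap.ext
    intro w
    have hw : w = w.re • (1 : ℂ) + w.im • Complex.I := by
      simp [Complex.real_smul, Complex.re_add_im]
    conv_lhs => rw [hw]
    conv_rhs => rw [hw]
    rw [map_add, map_add, map_smul, map_smul, map_smul, map_smul]
    have hL'1 : (L'.restrictScalars ℝ) 1 = c := by simp [hL']
    have hL'I : (L'.restrictScalars ℝ) Complex.I = c * Complex.I := by
      simp [hL']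
    rw [hL'1, hL'I, hL1, hLI, hc]
    have hci : ((a : ℂ) - (b : ℂ) * Complex.I) * Complex.I = (b : ℂ) + (a : ℂ) * Complex.I := by
      rw [sub_mul, mul_assoc, Complex.I_mul_I]
      ring
    rw [hci]
  exact ⟨L', hasFDerivAt_of_restrictScalars ℝ HG hrs⟩

lemma vec_decomp (v : Fin 2 → ℝ) :
    v = v 0 • (Pi.single 0 1 : Fin 2 → ℝ) + v 1 • (Pi.single 1 1 : Fin 2 → ℝ) := by
  ext i; fin_cases i <;> simp

lemma const_of_grad_zero (U : Set (Fin 2 → ℝ)) (hUopen : IsOpen U) (hUconn : IsConnected U)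
    (f : (Fin 2 → ℝ) → ℝ) (hf : ContDiffOn ℝ 2 f U)
    (hz : ∀ p ∈ U, pd 0 f p = 0 ∧ pd 1 f p = 0) :
    ∀ p ∈ U, ∀ q ∈ U, f p = f q := by
  have hder : ∀ p ∈ U, fderiv ℝ f p = 0 := by
    intro p hp
    ext v
    conv_lhs => rw [vec_decomp v]
    rw [map_add, map_smul, map_smul]
    have h0 := (hz p hp).1
    have h1 := (hz p hp).2
    simp only [pd] at h0 h1
    simp [h0, h1]
  have key : ∀ p ∈ U, ∃ r > 0, Metric.ball p r ⊆ U ∧ ∀ q ∈ Metric.ball p r, f q = f p := by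
    intro p hp
    obtain ⟨r, hr, hball⟩ := Metric.isOpen_iff.1 hUopen p hp
    refine ⟨r, hr, hball, fun q hq => ?_⟩
    refine (convex_ball p r).is_const_of_fderivWithin_eq_zero
      ((hf.mono hball).differentiableOn two_ne_zero) (fun x hx => ?_) hq (Metric.mem_ball_self hr)
    rw [fderivWithin_of_isOpen Metric.isOpen_ball hx]
    exact hder x (hball hx)
  intro p hp q hq
  set A := {x ∈ U | f x = f p} with hA
  set B := {x ∈ U | f x ≠ f p} with hB
  have hAopen : IsOpen A := by
    rw [Metric.isOpen_iff]
    rintro x ⟨hxU, hxf⟩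
    obtain ⟨r, hr, hball, hconst⟩ := key x hxU
    exact ⟨r, hr, fun y hy => ⟨hball hy, (hconst y hy).trans hxf⟩⟩
  have hBopen : IsOpen B := by
    rw [Metric.isOpen_iff]
    rintro x ⟨hxU, hxf⟩
    obtain ⟨r, hr, hball, hconst⟩ := key x hxU
    exact ⟨r, hr, fun y hy => ⟨hball hy, by rw [hconst y hy]; exact hxf⟩⟩
  have hsub : U ⊆ A := by
    refine hUconn.isPreconnected.subset_left_of_subset_union hAopen hBopen ?_ ?_ ⟨p, hp, hp, rfl⟩
    · rw [Set.disjoint_left]; rintro x ⟨_, h1⟩ ⟨_, h2⟩; exact h2 h1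
    · intro x hx
      by_cases h : f x = f p
      · exact Or.inl ⟨hx, h⟩
      · exact Or.inr ⟨hx, h⟩
  exact ((hsub hq).2.trans (hsub hp).2.symm).symm

/-- If `f` is a C² harmonic function on a connected, open, simply connected subset of `ℝ²`,
then either `f` is constant on `U`, or every zero of the gradient of `f` in `U` is isolated
in the set of such zeros. -/
theorem harmonic_constant_or_gradient_zeros_isolated
    (U : Set (Fin 2 → ℝ)) (hUopen : IsOpen U) (hUconn : IsConnected U)
    (hUsc : SimplyConnectedSpace U)
    (f : (Fin 2 → ℝ) → ℝ) (hf : ContDiffOn ℝ 2 f U)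
    (hharm : ∀ p ∈ U, pd 0 (pd 0 f) p + pd 1 (pd 1 f) p = 0) :
    (∀ p ∈ U, ∀ q ∈ U, f p = f q) ∨
      (∀ p ∈ {q ∈ U | pd 0 f q = 0 ∧ pd 1 f q = 0},
        𝓝[{q ∈ U | pd 0 f q = 0 ∧ pd 1 f q = 0} \ {p}] p = ⊥) := by
  by_cases hz : ∀ p ∈ U, pd 0 f p = 0 ∧ pd 1 f p = 0
  · exact Or.inl (const_of_grad_zero U hUopen hUconn f hf hz)
  right
  push_neg at hz
  obtain ⟨p₀, hp₀U, hp₀⟩ := hz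
  set S := {q ∈ U | pd 0 f q = 0 ∧ pd 1 f q = 0} with hS
  set V := (⇑eC) ⁻¹' U with hV
  have hVopen : IsOpen V := hUopen.preimage eC.continuous
  have hVpre : IsPreconnected V := by
    have himg : V = (⇑eC.symm) '' U := by
      ext w
      simp only [hV, Set.mem_preimage, Set.mem_image]
      constructor
      · intro h; exact ⟨eC w, h, eC.symm_apply_apply w⟩
      · rintro ⟨x, hx, rfl⟩; rwa [eC.apply_symm_apply]
    rw [himg]
    exact (hUconn.image _ eC.symm.continuous.continuousOn).isPreconnected
  have hanal : AnalyticOnNhd ℂ (gg f) V :=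
    DifferentiableOn.analyticOnNhd
      (fun w hw => (gg_diff U hUopen f hf hharm w hw).differentiableWithinAt) hVopen
  -- gg is not identically zero on V
  have hz₁V : eC.symm p₀ ∈ V := by
    simp only [hV, Set.mem_preimage, eC.apply_symm_apply]; exact hp₀U
  have hgz₁ : gg f (eC.symm p₀) ≠ 0 := by
    intro h
    simp only [gg, eC.apply_symm_apply] at h
    rw [Complex.ext_iff] at h
    simp [Complex.real_smul] at h
    exact (hp₀ h.1) h.2
  intro p hp
  obtain ⟨hpU, hp0, hp1⟩ := hp
  have hzV : eC.symm p ∈ V := by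
    simp only [hV, Set.mem_preimage, eC.apply_symm_apply]; exact hpU
  rcases (hanal _ hzV).eventually_eq_zero_or_eventually_ne_zero with h | h
  · exfalso
    exact hgz₁ (hanal.eqOn_zero_of_preconnected_of_eventuallyEq_zero hVpre hzV h hz₁V)
  · -- punctured neighborhood where gg ≠ 0
    have hmap : 𝓝[≠] p = Filter.map (⇑eC) (𝓝[≠] (eC.symm p)) := by
      have hm := eC.toHomeomorph.map_punctured_nhds_eq (eC.symm p)
      simp only [ContinuousLinearEquiv.coe_toHomeomorph, eC.apply_symm_apply] at hm
      exact hm.symm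
    have hev : ∀ᶠ x in 𝓝[≠] p, ¬(pd 0 f x = 0 ∧ pd 1 f x = 0) := by
      rw [hmap, Filter.eventually_map]
      filter_upwards [h] with w hw
      rintro ⟨h0, h1⟩
      exact hw (by simp [gg, h0, h1])
    have hsub : S \ {p} ⊆ {p}ᶜ := fun x hx => hx.2
    have h1 : (S \ {p})ᶜ ∈ 𝓝[S \ {p}] p := by
      refine nhdsWithin_mono p hsub ?_
      filter_upwards [hev] with x hx
      intro hxT
      exact hx ⟨hxT.1.2.1, hxT.1.2.2⟩
    have h2 : S \ {p} ∈ 𝓝[S \ {p}] p := self_mem_nhdsWithin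
    rw [← Filter.empty_mem_iff_bot]
    have h3 := Filter.inter_mem h2 h1
    simpa using h3
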